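/- arXiv:1805.08866 — 3 statements merged into one kernel-verified Lean document; each statement's English description precedes it below -/
import Mathlib

section
/- Let K : ℝ^k → P(ℝ^k) satisfy ε·d₂-privacy (Euclidean metric). Then the extended mechanism K* on length-n bags of word vectors, defined by K*(d)(z) = ∑_i ∏_j K(w_j)(v_{φ_i(j)}) summing over distinct permutations of z, satisfies ε-document-indistinguishability: K*(d)(z) ≤ e^{ε·d_W(d,d')} K*(d')(z) for all equal-length bags d, d' and outputs z, where d_W is the Word Mover's Distance with Euclidean cost. -/
open Finset

open scoped Classical in
/-- The extension K* of a per-word density mechanism K to length-n documents: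
K*(d)(z) = ∑ over the distinct permutations u of the words of z of ∏ⱼ K(wⱼ)(uⱼ). -/
noncomputable def Kstar {k n : ℕ}
    (K : EuclideanSpace ℝ (Fin k) → EuclideanSpace ℝ (Fin k) → ℝ)
    (w v : Fin n → EuclideanSpace ℝ (Fin k)) : ℝ :=
  ∑ u ∈ Finset.image (fun σ : Equiv.Perm (Fin n) => v ∘ σ) Finset.univ,
    ∏ j, K (w j) (u j)

/-- if K satisfies ε·d₂-privacy on ℝ^k (density form), then K* satisfies
ε-document-indistinguishability with respect to the (unnormalised) Word Mover's Distance
d_W(d,d') = min_σ ∑ᵢ ‖wᵢ − w'_{σ(i)}‖₂. -/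
theorem Kstar_document_indistinguishability (k n : ℕ) (ε : ℝ) (hε : 0 < ε)
    (K : EuclideanSpace ℝ (Fin k) → EuclideanSpace ℝ (Fin k) → ℝ)
    (hK_nonneg : ∀ x z, 0 ≤ K x z)
    (hK_priv : ∀ x x' z, K x z ≤ Real.exp (ε * dist x x') * K x' z)
    (d d' z : Fin n → EuclideanSpace ℝ (Fin k)) :
    Kstar K d z ≤
      Real.exp (ε * ⨅ σ : Equiv.Perm (Fin n), ∑ i, dist (d i) (d' (σ i))) *
        Kstar K d' z := by
  classical
  obtain ⟨σ₀, hσ₀⟩ := Finite.exists_min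
    (fun σ : Equiv.Perm (Fin n) => ∑ i, dist (d i) (d' (σ i)))
  have hinf : (⨅ σ : Equiv.Perm (Fin n), ∑ i, dist (d i) (d' (σ i)))
      = ∑ i, dist (d i) (d' (σ₀ i)) := by
    refine le_antisymm (ciInf_le (Finite.bddBelow_range _) σ₀) (le_ciInf hσ₀)
  rw [hinf]
  set c : ℝ := ∑ i, dist (d i) (d' (σ₀ i)) with hc
  unfold Kstar
  set S := Finset.image (fun σ : Equiv.Perm (Fin n) => z ∘ σ)
    (Finset.univ : Finset (Equiv.Perm (Fin n))) with hS
  rw [Finset.mul_sum]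
  have key : ∀ u ∈ S, ∏ j, K (d j) (u j)
      ≤ Real.exp (ε * c) * ∏ j, K (d' j) ((u ∘ ⇑σ₀⁻¹) j) := by
    intro u _
    have h1 : ∏ j, K (d j) (u j)
        ≤ ∏ j, Real.exp (ε * dist (d j) (d' (σ₀ j))) * K (d' (σ₀ j)) (u j) := by
      apply Finset.prod_le_prod
      · intro j _; exact hK_nonneg _ _
      · intro j _; exact hK_priv _ _ _
    have h2 : ∏ j, Real.exp (ε * dist (d j) (d' (σ₀ j))) * K (d' (σ₀ j)) (u j)
        = Real.exp (ε * c) * ∏ j, K (d' (σ₀ j)) (u j) := by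
      rw [Finset.prod_mul_distrib, ← Real.exp_sum, ← Finset.mul_sum, hc]
    have h3 : ∏ j, K (d' (σ₀ j)) (u j) = ∏ j, K (d' j) ((u ∘ ⇑σ₀⁻¹) j) := by
      rw [← Equiv.prod_comp σ₀ (fun j => K (d' j) ((u ∘ ⇑σ₀⁻¹) j))]
      simp
    calc ∏ j, K (d j) (u j) ≤ _ := h1
      _ = _ := h2
      _ = _ := by rw [h3]
  calc ∑ u ∈ S, ∏ j, K (d j) (u j)
      ≤ ∑ u ∈ S, Real.exp (ε * c) * ∏ j, K (d' j) ((u ∘ ⇑σ₀⁻¹) j) :=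
        Finset.sum_le_sum key
    _ = ∑ u ∈ S, Real.exp (ε * c) * ∏ j, K (d' j) (u j) := by
        refine Finset.sum_nbij' (fun u => u ∘ ⇑σ₀⁻¹) (fun u => u ∘ ⇑σ₀) ?_ ?_ ?_ ?_ ?_
        · intro u hu
          simp only [hS, Finset.mem_image, Finset.mem_univ, true_and] at hu ⊢
          obtain ⟨τ, rfl⟩ := hu
          exact ⟨σ₀⁻¹.trans τ, by ext j; simp [Function.comp]⟩
        · intro u hu
          simp only [hS, Finset.mem_image, Finset.mem_univ, true_and] at hu ⊢
          obtain ⟨τ, rfl⟩ := hu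
          exact ⟨σ₀.trans τ, by ext j; simp [Function.comp]⟩
        · intro u _; ext j; simp
        · intro u _; ext j; simp
        · intro u _; rfl
end

section
/- Let U be uniform on the unit sphere S^{n−1} ⊂ ℝ^n, R ~ Gamma(n, 1/ε) independent of U, and define the mechanism K(x) to be the distribution of x + R·U. Then K satisfies ε·d₂-privacy: for all x, x' ∈ ℝ^n and measurable Z ⊆ ℝ^n, K(x)(Z) ≤ e^{ε‖x−x'‖₂} K(x')(Z). -/
open MeasureTheory

/-- The uniform probability distribution on the unit sphere of ℝⁿ, as a measure on ℝⁿ. -/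
noncomputable def sphereUniform (n : ℕ) : Measure (EuclideanSpace ℝ (Fin n)) :=
  (((volume : Measure (EuclideanSpace ℝ (Fin n))).toSphere Set.univ)⁻¹ •
      (volume : Measure (EuclideanSpace ℝ (Fin n))).toSphere).map Subtype.val

/-- The n-dimensional Laplace mechanism: K(x) is the law of x + R·U where U is uniform on the
unit sphere and R ~ Gamma(n, 1/ε) (shape n, rate ε), independently. -/
noncomputable def laplaceMechanism (n : ℕ) (ε : ℝ) (x : EuclideanSpace ℝ (Fin n)) :
    Measure (EuclideanSpace ℝ (Fin n)) :=
  ((ProbabilityTheory.gammaMeasure n ε).prod (sphereUniform n)).map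
    (fun p => x + p.1 • p.2)

open MeasureTheory Measure Set Metric Real ProbabilityTheory
open scoped ENNReal NNReal

theorem laplaceMechanism_density (n : ℕ) (hn : 0 < n) (ε : ℝ) (hε : 0 < ε)
    (x : EuclideanSpace ℝ (Fin n)) (Z : Set (EuclideanSpace ℝ (Fin n))) (hZ : MeasurableSet Z) :
    laplaceMechanism n ε x Z
      = ((volume : Measure (EuclideanSpace ℝ (Fin n))).toSphere Set.univ)⁻¹
          * ENNReal.ofReal (ε ^ n / Real.Gamma n)
          * ∫⁻ z in Z, ENNReal.ofReal (Real.exp (-(ε * ‖z - x‖))) := by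
  haveI : Nonempty (Fin n) := ⟨⟨0, hn⟩⟩
  set ν : Measure (sphere (0:EuclideanSpace ℝ (Fin n)) 1) :=
    (volume : Measure (EuclideanSpace ℝ (Fin n))).toSphere with hν
  have hν0 : ν Set.univ ≠ 0 := by
    rw [hν, Measure.toSphere_apply_univ]
    simp [finrank_euclideanSpace_fin, hn.ne',
      (measure_ball_pos volume (0:EuclideanSpace ℝ (Fin n)) one_pos).ne']
  set m : ℝ≥0∞ := (ν Set.univ)⁻¹ with hm
  have hmtop : m ≠ ⊤ := by simpa [hm] using ENNReal.inv_ne_top.2 hν0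
  set k : ℝ≥0∞ := ENNReal.ofReal (ε ^ n / Real.Gamma n) with hk
  have hktop : k ≠ ⊤ := ENNReal.ofReal_ne_top
  -- the shifted set
  set W : Set (EuclideanSpace ℝ (Fin n)) := (fun w => x + w) ⁻¹' Z with hW
  have hWm : MeasurableSet W := hZ.preimage (measurable_const_add x)
  -- finiteness of sphereUniform
  haveI : IsFiniteMeasure (sphereUniform n) := by
    constructor
    rw [sphereUniform, Measure.map_apply measurable_subtype_coe MeasurableSet.univ,
      Measure.smul_apply, smul_eq_mul]
    exact ENNReal.mul_lt_top (ENNReal.inv_lt_top.2 (pos_iff_ne_zero.2 hν0))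
      (measure_lt_top _ _)
  -- F r = ν of sphere points landing in Z
  set F : ℝ → ℝ≥0∞ :=
    fun r => ν {u : sphere (0:EuclideanSpace ℝ (Fin n)) 1 | x + r • (u : EuclideanSpace ℝ (Fin n)) ∈ Z} with hF
  have hTm : MeasurableSet {p : ℝ × sphere (0:EuclideanSpace ℝ (Fin n)) 1 |
      x + p.1 • (p.2 : EuclideanSpace ℝ (Fin n)) ∈ Z} := by
    apply hZ.preimage
    exact (continuous_const.add (continuous_fst.smul
      (continuous_subtype_val.comp continuous_snd))).measurable
  have hFm : Measurable F := by
    exact measurable_measure_prodMk_left hTm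
  -- step 1 : reduce to radial integral
  have step1 : laplaceMechanism n ε x Z
      = m * ∫⁻ r, gammaPDF n ε r * F r ∂volume := by
    rw [laplaceMechanism,
      Measure.map_apply (show Measurable (fun p : ℝ × EuclideanSpace ℝ (Fin n) => x + p.1 • p.2) from (continuous_const.add (continuous_fst.smul continuous_snd)).measurable) hZ,
      Measure.prod_apply (hZ.preimage (show Measurable (fun p : ℝ × EuclideanSpace ℝ (Fin n) => x + p.1 • p.2) from (continuous_const.add (continuous_fst.smul continuous_snd)).measurable))]
    have : ∀ r : ℝ, sphereUniform n (Prod.mk r ⁻¹' ((fun p : ℝ × EuclideanSpace ℝ (Fin n) => x + p.1 • p.2) ⁻¹' Z))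
        = m * F r := by
      intro r
      have hA : MeasurableSet {u : EuclideanSpace ℝ (Fin n) | x + r • u ∈ Z} :=
        hZ.preimage (continuous_const.add (continuous_const_smul r)).measurable
      rw [sphereUniform]
      rw [show (Prod.mk r ⁻¹' ((fun p : ℝ × EuclideanSpace ℝ (Fin n) => x + p.1 • p.2) ⁻¹' Z))
          = {u : EuclideanSpace ℝ (Fin n) | x + r • u ∈ Z} from rfl]
      rw [Measure.map_apply measurable_subtype_coe hA, Measure.smul_apply, smul_eq_mul]
      rfl
    have hpdf : Measurable (gammaPDF (n:ℝ) ε) := by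
      unfold gammaPDF
      exact (measurable_gammaPDFReal _ _).ennreal_ofReal
    rw [lintegral_congr this, lintegral_const_mul' _ _ hmtop,
      gammaMeasure, lintegral_withDensity_eq_lintegral_mul _ hpdf hFm]
    rfl
  -- step 2 : restrict the radial integral to (0, ∞) and expand the pdf
  have step2 : ∫⁻ r, gammaPDF (n:ℝ) ε r * F r ∂volume
      = k * ∫⁻ r in Ioi (0:ℝ),
          ENNReal.ofReal (r ^ (n-1)) * (ENNReal.ofReal (exp (-(ε*r))) * F r) ∂volume := by
    have hsplit : ∫⁻ r, gammaPDF (n:ℝ) ε r * F r ∂volume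
        = ∫⁻ r in Ioi (0:ℝ), gammaPDF (n:ℝ) ε r * F r ∂volume := by
      rw [← lintegral_add_compl (fun r => gammaPDF (n:ℝ) ε r * F r) measurableSet_Ioi]
      have h0 : ∫⁻ r in (Ioi (0:ℝ))ᶜ, gammaPDF (n:ℝ) ε r * F r ∂volume = 0 := by
        rw [compl_Ioi]
        have h1 : ∀ᵐ r : ℝ ∂volume, r ≠ 0 := by
          simpa [ae_iff, Set.setOf_eq_eq_singleton'] using measure_singleton (0:ℝ)
        have hae : ∀ᵐ r ∂(volume.restrict (Iic (0:ℝ))), gammaPDF (n:ℝ) ε r * F r = 0 := by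
          filter_upwards [ae_restrict_of_ae h1, ae_restrict_mem measurableSet_Iic] with r hr hr'
          rw [gammaPDF_of_neg (lt_of_le_of_ne hr' hr), zero_mul]
        rw [lintegral_congr_ae hae, lintegral_zero]
      rw [h0, add_zero]
    have hpdfval : ∀ r ∈ Ioi (0:ℝ), gammaPDF (n:ℝ) ε r * F r
        = k * (ENNReal.ofReal (r ^ (n-1)) * (ENNReal.ofReal (exp (-(ε*r))) * F r)) := by
      intro r hr
      rw [gammaPDF_of_nonneg hr.out.le]
      have hcast : ((n:ℝ) - 1) = ((n-1 : ℕ) : ℝ) := by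
        rw [Nat.cast_sub hn, Nat.cast_one]
      have hΓ : (0:ℝ) ≤ ε ^ n / Real.Gamma n :=
        div_nonneg (pow_nonneg hε.le _)
          (Real.Gamma_pos_of_pos (by exact_mod_cast hn)).le
      rw [hcast, Real.rpow_natCast, Real.rpow_natCast,
        ENNReal.ofReal_mul (mul_nonneg hΓ (pow_nonneg hr.out.le _)), ENNReal.ofReal_mul hΓ, hk]
      ring
    rw [hsplit, setLIntegral_congr_fun measurableSet_Ioi hpdfval,
      lintegral_const_mul' _ _ hktop]
  -- step 3 : polar coordinates
  have hfr : Module.finrank ℝ (EuclideanSpace ℝ (Fin n)) = n := finrank_euclideanSpace_fin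
  have hexpm : Measurable fun w : EuclideanSpace ℝ (Fin n) =>
      ENNReal.ofReal (exp (-(ε * ‖w‖))) := by
    apply Measurable.ennreal_ofReal
    exact (Real.continuous_exp.comp (continuous_const.mul continuous_norm).neg).measurable
  set G : EuclideanSpace ℝ (Fin n) → ℝ≥0∞ :=
    W.indicator (fun w => ENNReal.ofReal (exp (-(ε * ‖w‖)))) with hG
  have hGm : Measurable G := hexpm.indicator hWm
  set j : ℝ → ℝ≥0∞ := fun t => ∫⁻ u : sphere (0:EuclideanSpace ℝ (Fin n)) 1,
      G (t • (u : EuclideanSpace ℝ (Fin n))) ∂ν with hj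
  have hjm : Measurable j := by
    apply Measurable.lintegral_prod_right'
      (f := fun p : ℝ × sphere (0:EuclideanSpace ℝ (Fin n)) 1 => G (p.1 • (p.2 : EuclideanSpace ℝ (Fin n))))
    exact hGm.comp (continuous_fst.smul (continuous_subtype_val.comp continuous_snd)).measurable
  have polar : ∫⁻ z in Z, ENNReal.ofReal (exp (-(ε * ‖z - x‖)))
        ∂(volume : Measure (EuclideanSpace ℝ (Fin n)))
      = ∫⁻ r in Ioi (0:ℝ),
          ENNReal.ofReal (r ^ (n-1)) * (ENNReal.ofReal (exp (-(ε*r))) * F r) ∂volume := by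
    have htrans : ∫⁻ z in Z, ENNReal.ofReal (exp (-(ε * ‖z - x‖)))
          ∂(volume : Measure (EuclideanSpace ℝ (Fin n)))
        = ∫⁻ w in W, ENNReal.ofReal (exp (-(ε * ‖w‖))) ∂volume := by
      have hh : Measurable fun z : EuclideanSpace ℝ (Fin n) =>
          ENNReal.ofReal (exp (-(ε * ‖z - x‖))) :=
        Measurable.ennreal_ofReal
          (Real.continuous_exp.comp
            (continuous_const.mul (continuous_id.sub continuous_const).norm).neg).measurable
      conv_lhs => rw [← map_add_left_eq_self (volume : Measure (EuclideanSpace ℝ (Fin n))) x]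
      rw [setLIntegral_map hZ hh (measurable_const_add x)]
      simp only [add_sub_cancel_left]
      rfl
    rw [htrans]
    have mp := Measure.measurePreserving_homeomorphUnitSphereProd
      (volume : Measure (EuclideanSpace ℝ (Fin n)))
    rw [hfr] at mp
    have hg : Measurable fun q : sphere (0:EuclideanSpace ℝ (Fin n)) 1 × Ioi (0:ℝ) =>
        G ((q.2 : ℝ) • (q.1 : EuclideanSpace ℝ (Fin n))) :=
      hGm.comp ((continuous_subtype_val.comp continuous_snd).smul
        (continuous_subtype_val.comp continuous_fst)).measurable
    have hden : Measurable fun r : Ioi (0:ℝ) => ENNReal.ofReal ((r:ℝ) ^ (n-1)) :=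
      (measurable_subtype_coe.pow_const _).ennreal_ofReal
    have hjm' : Measurable fun r : Ioi (0:ℝ) => j (r:ℝ) := hjm.comp measurable_subtype_coe
    calc ∫⁻ w in W, ENNReal.ofReal (exp (-(ε * ‖w‖))) ∂volume
        = ∫⁻ w, G w ∂(volume : Measure (EuclideanSpace ℝ (Fin n))) :=
          (lintegral_indicator hWm _).symm
      _ = ∫⁻ w in ({(0:EuclideanSpace ℝ (Fin n))}ᶜ : Set (EuclideanSpace ℝ (Fin n))), G w ∂volume := by
          rw [MeasureTheory.restrict_compl_singleton]
      _ = ∫⁻ p : ({(0:EuclideanSpace ℝ (Fin n))}ᶜ : Set (EuclideanSpace ℝ (Fin n))), G (p : EuclideanSpace ℝ (Fin n))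
            ∂((volume : Measure (EuclideanSpace ℝ (Fin n))).comap Subtype.val) :=
          (lintegral_subtype_comap (measurableSet_singleton _).compl _).symm
      _ = ∫⁻ q : sphere (0:EuclideanSpace ℝ (Fin n)) 1 × Ioi (0:ℝ),
            G ((q.2 : ℝ) • (q.1 : EuclideanSpace ℝ (Fin n)))
            ∂(ν.prod (volumeIoiPow (n - 1))) := by
          rw [← mp.lintegral_comp hg]
          refine lintegral_congr fun p => ?_
          have hp : (p : EuclideanSpace ℝ (Fin n)) ≠ 0 := p.2
          simp only [homeomorphUnitSphereProd_apply_snd_coe,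
            homeomorphUnitSphereProd_apply_fst_coe]
          rw [smul_inv_smul₀ (norm_ne_zero_iff.2 hp)]
      _ = ∫⁻ r : Ioi (0:ℝ), ∫⁻ u : sphere (0:EuclideanSpace ℝ (Fin n)) 1,
            G ((r:ℝ) • (u : EuclideanSpace ℝ (Fin n))) ∂ν ∂(volumeIoiPow (n-1)) :=
          lintegral_prod_symm' _ hg
      _ = ∫⁻ r : Ioi (0:ℝ), (fun t : ℝ => ENNReal.ofReal (t ^ (n-1)) * j t) (r:ℝ)
            ∂((volume : Measure ℝ).comap Subtype.val) := by
          rw [Measure.volumeIoiPow, lintegral_withDensity_eq_lintegral_mul _ hden hjm']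
          exact lintegral_congr fun r => rfl
      _ = ∫⁻ t in Ioi (0:ℝ), ENNReal.ofReal (t ^ (n-1)) * j t ∂volume :=
          lintegral_subtype_comap measurableSet_Ioi
            (fun t : ℝ => ENNReal.ofReal (t ^ (n-1)) * j t)
      _ = ∫⁻ r in Ioi (0:ℝ),
            ENNReal.ofReal (r ^ (n-1)) * (ENNReal.ofReal (exp (-(ε*r))) * F r) ∂volume := by
          refine setLIntegral_congr_fun measurableSet_Ioi (fun r hr => ?_)
          congr 1
          have hset : MeasurableSet {u : sphere (0:EuclideanSpace ℝ (Fin n)) 1 |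
              r • (u : EuclideanSpace ℝ (Fin n)) ∈ W} :=
            hWm.preimage ((continuous_const_smul r).comp continuous_subtype_val).measurable
          have hptw : ∀ u : sphere (0:EuclideanSpace ℝ (Fin n)) 1,
              G (r • (u : EuclideanSpace ℝ (Fin n)))
                = Set.indicator {u : sphere (0:EuclideanSpace ℝ (Fin n)) 1 |
                    r • (u : EuclideanSpace ℝ (Fin n)) ∈ W}
                  (fun _ => ENNReal.ofReal (exp (-(ε*r)))) u := by
            intro u
            have hu : ‖(u : EuclideanSpace ℝ (Fin n))‖ = 1 := mem_sphere_zero_iff_norm.mp u.2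
            rw [hG]
            by_cases h : r • (u : EuclideanSpace ℝ (Fin n)) ∈ W
            · rw [Set.indicator_of_mem h, Set.indicator_of_mem (by exact h)]
              rw [norm_smul, hu, mul_one, Real.norm_eq_abs, abs_of_pos hr.out]
            · rw [Set.indicator_of_notMem h, Set.indicator_of_notMem (by exact h)]
          show ∫⁻ u : sphere (0:EuclideanSpace ℝ (Fin n)) 1,
              G (r • (u : EuclideanSpace ℝ (Fin n))) ∂ν = _
          rw [lintegral_congr hptw, lintegral_indicator_const hset]
          rfl
  rw [step1, step2, polar, mul_assoc]



/-- the mechanism x ↦ law of x + R·U satisfies ε·d₂-privacy. -/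
theorem laplaceMechanism_privacy (n : ℕ) (hn : 0 < n) (ε : ℝ) (hε : 0 < ε) :
    ∀ x x' : EuclideanSpace ℝ (Fin n), ∀ Z : Set (EuclideanSpace ℝ (Fin n)),
      MeasurableSet Z →
        laplaceMechanism n ε x Z ≤
          ENNReal.ofReal (Real.exp (ε * dist x x')) * laplaceMechanism n ε x' Z := by
  intro x x' Z hZ
  rw [laplaceMechanism_density n hn ε hε x Z hZ, laplaceMechanism_density n hn ε hε x' Z hZ]
  have key : (∫⁻ z in Z, ENNReal.ofReal (Real.exp (-(ε * ‖z - x‖)))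
        ∂(volume : Measure (EuclideanSpace ℝ (Fin n))))
      ≤ ENNReal.ofReal (Real.exp (ε * dist x x')) *
        ∫⁻ z in Z, ENNReal.ofReal (Real.exp (-(ε * ‖z - x'‖))) ∂volume := by
    rw [← lintegral_const_mul' _ _ ENNReal.ofReal_ne_top]
    refine lintegral_mono fun z => ?_
    rw [← ENNReal.ofReal_mul (Real.exp_nonneg _), ← Real.exp_add]
    apply ENNReal.ofReal_le_ofReal
    apply Real.exp_le_exp.2
    have h2 : ‖z - x'‖ - ‖z - x‖ ≤ ‖x - x'‖ := by
      have h := norm_sub_norm_le (z - x') (z - x)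
      have he : (z - x') - (z - x) = x - x' := by abel
      rwa [he] at h
    rw [dist_eq_norm]
    nlinarith [mul_le_mul_of_nonneg_left h2 hε.le]
  calc ((volume : Measure (EuclideanSpace ℝ (Fin n))).toSphere Set.univ)⁻¹
        * ENNReal.ofReal (ε ^ n / Real.Gamma n)
        * ∫⁻ z in Z, ENNReal.ofReal (Real.exp (-(ε * ‖z - x‖)))
      ≤ ((volume : Measure (EuclideanSpace ℝ (Fin n))).toSphere Set.univ)⁻¹
        * ENNReal.ofReal (ε ^ n / Real.Gamma n)
        * (ENNReal.ofReal (Real.exp (ε * dist x x')) *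
            ∫⁻ z in Z, ENNReal.ofReal (Real.exp (-(ε * ‖z - x'‖)))) :=
        mul_le_mul_right key _
    _ = ENNReal.ofReal (Real.exp (ε * dist x x')) *
          (((volume : Measure (EuclideanSpace ℝ (Fin n))).toSphere Set.univ)⁻¹
            * ENNReal.ofReal (ε ^ n / Real.Gamma n)
            * ∫⁻ z in Z, ENNReal.ofReal (Real.exp (-(ε * ‖z - x'‖)))) := by ring
end

section
/- If mechanisms K₁ : X₁ → P(Z₁) and K₂ : X₂ → P(Z₂) satisfy ε·d₁-privacy and ε·d₂-privacy respectively, then the product mechanism K(x₁,x₂) = K₁(x₁) ⊗ K₂(x₂) satisfies ε·d-privacy on X₁ × X₂ with d((x₁,x₂),(x₁',x₂')) = d₁(x₁,x₁') + d₂(x₂,x₂'). -/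
open MeasureTheory

/-- if K₁ satisfies ε·d₁-privacy and K₂ satisfies ε·d₂-privacy then the product
mechanism (x₁,x₂) ↦ K₁(x₁) ⊗ K₂(x₂) satisfies ε·d-privacy for the sum metric
d((x₁,x₂),(x₁',x₂')) = d₁(x₁,x₁') + d₂(x₂,x₂'). -/
theorem product_mechanism_privacy {X₁ X₂ Z₁ Z₂ : Type*}
    [MetricSpace X₁] [MetricSpace X₂] [MeasurableSpace Z₁] [MeasurableSpace Z₂] (ε : ℝ)
    (K₁ : X₁ → Measure Z₁) (K₂ : X₂ → Measure Z₂)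
    [∀ x, IsProbabilityMeasure (K₁ x)] [∀ x, IsProbabilityMeasure (K₂ x)]
    (h₁ : ∀ x x' : X₁, ∀ A : Set Z₁, MeasurableSet A →
      K₁ x A ≤ ENNReal.ofReal (Real.exp (ε * dist x x')) * K₁ x' A)
    (h₂ : ∀ x x' : X₂, ∀ A : Set Z₂, MeasurableSet A →
      K₂ x A ≤ ENNReal.ofReal (Real.exp (ε * dist x x')) * K₂ x' A) :
    ∀ p p' : X₁ × X₂, ∀ A : Set (Z₁ × Z₂), MeasurableSet A →
      (K₁ p.1).prod (K₂ p.2) A ≤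
        ENNReal.ofReal (Real.exp (ε * (dist p.1 p'.1 + dist p.2 p'.2))) *
          (K₁ p'.1).prod (K₂ p'.2) A := by
  intro p p' A hA
  set c₁ := ENNReal.ofReal (Real.exp (ε * dist p.1 p'.1)) with hc₁
  set c₂ := ENNReal.ofReal (Real.exp (ε * dist p.2 p'.2)) with hc₂
  have hsplit : ENNReal.ofReal (Real.exp (ε * (dist p.1 p'.1 + dist p.2 p'.2))) = c₁ * c₂ := by
    rw [mul_add, Real.exp_add, ENNReal.ofReal_mul (Real.exp_nonneg _)]
  rw [hsplit, Measure.prod_apply hA, Measure.prod_apply hA]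
  have hμ : K₁ p.1 ≤ c₁ • K₁ p'.1 := by
    rw [Measure.le_iff]
    intro s hs
    simpa using h₁ p.1 p'.1 s hs
  calc ∫⁻ x, K₂ p.2 (Prod.mk x ⁻¹' A) ∂ K₁ p.1
      ≤ ∫⁻ x, c₂ * K₂ p'.2 (Prod.mk x ⁻¹' A) ∂ K₁ p.1 := by
        refine lintegral_mono fun x => h₂ p.2 p'.2 _ (measurable_prodMk_left hA)
    _ ≤ ∫⁻ x, c₂ * K₂ p'.2 (Prod.mk x ⁻¹' A) ∂ (c₁ • K₁ p'.1) := lintegral_mono' hμ le_rfl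
    _ = c₁ * c₂ * ∫⁻ x, K₂ p'.2 (Prod.mk x ⁻¹' A) ∂ K₁ p'.1 := by
        rw [lintegral_smul_measure, lintegral_const_mul' _ _ ENNReal.ofReal_ne_top, ← hc₂]
        ring
end
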